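/- If (A, α) is a right Galois object for a Hopf *-algebra H, then h^[2]* ⊗ h^[1]* = (S(h)*)^[1] ⊗ (S(h)*)^[2] for all h ∈ H; consequently the Miyashita–Ulbrich action satisfies (a ◁ h)* = a* ◁ S(h)*. -/
import Mathlib


open TensorProduct

set_option synthInstance.maxHeartbeats 1000000
set_option maxHeartbeats 2000000
set_option linter.unusedSectionVars false

noncomputable section

variable {H A : Type} [Ring H] [HopfAlgebra ℂ H] [StarRing H] [StarModule ℂ H]
  [Ring A] [Algebra ℂ A] [StarRing A] [StarModule ℂ A]

/-- The canonical Galois map `A ⊗ A → A ⊗ H`, `x ⊗ y ↦ (x⊗1)α(y)`. -/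
def canMap (α : A →ₗ[ℂ] A ⊗[ℂ] H) : A ⊗[ℂ] A →ₗ[ℂ] A ⊗[ℂ] H :=
  TensorProduct.map (LinearMap.mul' ℂ A) LinearMap.id ∘ₗ
    (TensorProduct.assoc ℂ A A H).symm.toLinearMap ∘ₗ TensorProduct.map LinearMap.id α

/-- The translation map `h ↦ h^[1] ⊗ h^[2] = can⁻¹(1 ⊗ h)`. -/
def translationMap (e : (A ⊗[ℂ] A) ≃ₗ[ℂ] (A ⊗[ℂ] H)) : H →ₗ[ℂ] A ⊗[ℂ] A :=
  e.symm.toLinearMap ∘ₗ (TensorProduct.mk ℂ A H) 1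

/-- The Miyashita–Ulbrich action `a ⊗ h ↦ h^[1] a h^[2]`. -/
def muAction (e : (A ⊗[ℂ] A) ≃ₗ[ℂ] (A ⊗[ℂ] H)) : A ⊗[ℂ] H →ₗ[ℂ] A :=
  LinearMap.mul' ℂ A ∘ₗ
    TensorProduct.map (LinearMap.mul' ℂ A) LinearMap.id ∘ₗ
    TensorProduct.map (TensorProduct.comm ℂ A A).toLinearMap LinearMap.id ∘ₗ
    (TensorProduct.assoc ℂ A A A).symm.toLinearMap ∘ₗ
    TensorProduct.map LinearMap.id (translationMap e)

/-- A right `H`-comodule algebra structure on `A` (pointfree formulation). -/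
structure IsComoduleAlgebra (α : A →ₗ[ℂ] A ⊗[ℂ] H) : Prop where
  coassoc : TensorProduct.map α LinearMap.id ∘ₗ α
    = (TensorProduct.assoc ℂ A H H).symm.toLinearMap ∘ₗ
        TensorProduct.map LinearMap.id Coalgebra.comul ∘ₗ α
  counital : (TensorProduct.rid ℂ A).toLinearMap ∘ₗ
      TensorProduct.map LinearMap.id Coalgebra.counit ∘ₗ α = LinearMap.id
  mul_hom : α ∘ₗ LinearMap.mul' ℂ A
    = TensorProduct.map (LinearMap.mul' ℂ A) (LinearMap.mul' ℂ H) ∘ₗ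
        (TensorProduct.tensorTensorTensorComm ℂ A H A H).toLinearMap ∘ₗ
        TensorProduct.map α α
  one_hom : α 1 = (1 : A) ⊗ₜ[ℂ] (1 : H)

/- ### Auxiliary material -/

private lemma exists_fin_rep {M N : Type} [AddCommMonoid M] [AddCommMonoid N]
    [Module ℂ M] [Module ℂ N] (z : M ⊗[ℂ] N) :
    ∃ (n : ℕ) (x : Fin n → M) (y : Fin n → N), z = ∑ i, x i ⊗ₜ[ℂ] y i := by
  obtain ⟨s, hs⟩ := TensorProduct.exists_finset z
  refine ⟨s.card, fun i => ((s.equivFin.symm i : s) : M × N).1,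
    fun i => ((s.equivFin.symm i : s) : M × N).2, ?_⟩
  rw [hs, ← Finset.sum_attach s (fun p => p.1 ⊗ₜ[ℂ] p.2)]
  exact Fintype.sum_equiv s.equivFin _ _ (fun p => by simp)

/-- The star map `a ⊗ h ↦ a* ⊗ h*` on `A ⊗[ℂ] H`, as an additive monoid hom. -/
private def starT : A ⊗[ℂ] H →+ A ⊗[ℂ] H :=
  TensorProduct.liftAddHom
    { toFun := fun a =>
        { toFun := fun h => star a ⊗ₜ[ℂ] star h
          map_zero' := by simp
          map_add' := fun h k => by simp [star_add, TensorProduct.tmul_add] }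
      map_zero' := by ext h; simp
      map_add' := fun a b => by ext h; simp [star_add, TensorProduct.add_tmul] }
    (fun c a h => by
      show star (c • a) ⊗ₜ[ℂ] star h = star a ⊗ₜ[ℂ] star (c • h)
      rw [star_smul, star_smul, TensorProduct.smul_tmul])

@[simp] private lemma starT_tmul (a : A) (h : H) :
    starT (a ⊗ₜ[ℂ] h) = star a ⊗ₜ[ℂ] star h :=
  TensorProduct.liftAddHom_tmul _ _ a h

/-- The map `(a ⊗ g) ⊗ k ↦ a ⊗ g·S(k)`. -/
private def psiMap (A H : Type) [Ring A] [Algebra ℂ A] [Ring H] [HopfAlgebra ℂ H] :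
    (A ⊗[ℂ] H) ⊗[ℂ] H →ₗ[ℂ] A ⊗[ℂ] H :=
  (LinearMap.lTensor A (LinearMap.mul' ℂ H)) ∘ₗ (TensorProduct.assoc ℂ A H H).toLinearMap ∘ₗ
    (LinearMap.lTensor (A ⊗[ℂ] H) (HopfAlgebra.antipode (R := ℂ)))

@[simp] private lemma psiMap_tmul (a : A) (g k : H) :
    psiMap A H ((a ⊗ₜ[ℂ] g) ⊗ₜ[ℂ] k) = a ⊗ₜ[ℂ] (g * HopfAlgebra.antipode (R := ℂ) k) := by
  simp [psiMap, LinearMap.lTensor_tmul, TensorProduct.assoc_tmul, LinearMap.mul'_apply]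

private lemma psiMap_mul (w : A ⊗[ℂ] H) (k : H) :
    psiMap A H (w ⊗ₜ[ℂ] k) = w * ((1 : A) ⊗ₜ[ℂ] HopfAlgebra.antipode (R := ℂ) k) := by
  induction w with
  | zero => simp [TensorProduct.zero_tmul]
  | tmul a g => simp [Algebra.TensorProduct.tmul_mul_tmul]
  | add x y hx hy => rw [TensorProduct.add_tmul, map_add, hx, hy, add_mul]

private lemma ttc_mul (s t : A ⊗[ℂ] H) :
    TensorProduct.map (LinearMap.mul' ℂ A) (LinearMap.mul' ℂ H)
      ((TensorProduct.tensorTensorTensorComm ℂ A H A H) (s ⊗ₜ[ℂ] t)) = s * t := by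
  induction s with
  | zero => simp [TensorProduct.zero_tmul]
  | add x y hx hy => rw [TensorProduct.add_tmul, map_add, map_add, hx, hy, add_mul]
  | tmul p q =>
    induction t with
    | zero => simp [TensorProduct.tmul_zero]
    | add x y hx hy => rw [TensorProduct.tmul_add, map_add, map_add, hx, hy, mul_add]
    | tmul r w =>
      simp [TensorProduct.tensorTensorTensorComm_tmul, LinearMap.mul'_apply,
        Algebra.TensorProduct.tmul_mul_tmul]

private lemma alpha_mul (α : A →ₗ[ℂ] A ⊗[ℂ] H) (hα : IsComoduleAlgebra α) (x y : A) :
    α (x * y) = α x * α y := by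
  have h := LinearMap.congr_fun hα.mul_hom (x ⊗ₜ[ℂ] y)
  simp only [LinearMap.comp_apply, LinearMap.mul'_apply, TensorProduct.map_tmul,
    LinearEquiv.coe_coe] at h
  rw [h, ttc_mul]

private lemma can_tmul (α : A →ₗ[ℂ] A ⊗[ℂ] H) (x y : A) :
    canMap α (x ⊗ₜ[ℂ] y) = (x ⊗ₜ[ℂ] (1 : H)) * α y := by
  show (TensorProduct.map (LinearMap.mul' ℂ A) LinearMap.id)
      ((TensorProduct.assoc ℂ A A H).symm
        ((TensorProduct.map LinearMap.id α) (x ⊗ₜ[ℂ] y))) = _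
  rw [TensorProduct.map_tmul, LinearMap.id_apply]
  induction (α y) with
  | zero => simp [TensorProduct.tmul_zero]
  | tmul a g =>
    simp [TensorProduct.assoc_symm_tmul, LinearMap.mul'_apply,
      Algebra.TensorProduct.tmul_mul_tmul]
  | add s t hs ht => rw [TensorProduct.tmul_add, map_add, map_add, hs, ht, mul_add]

private lemma psi_assoc_symm (a : A) (w : H ⊗[ℂ] H) :
    psiMap A H ((TensorProduct.assoc ℂ A H H).symm (a ⊗ₜ[ℂ] w)) =
      a ⊗ₜ[ℂ] (LinearMap.mul' ℂ H ((HopfAlgebra.antipode (R := ℂ)).lTensor H w)) := by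
  induction w with
  | zero => simp [TensorProduct.tmul_zero]
  | tmul g k => simp [TensorProduct.assoc_symm_tmul, LinearMap.mul'_apply]
  | add s t hs ht =>
    rw [TensorProduct.tmul_add, map_add, map_add, hs, ht, map_add, map_add,
      TensorProduct.tmul_add]

private lemma psi_alpha (α : A →ₗ[ℂ] A ⊗[ℂ] H) (hα : IsComoduleAlgebra α) (y : A) :
    psiMap A H (TensorProduct.map α LinearMap.id (α y)) = y ⊗ₜ[ℂ] (1 : H) := by
  have hco := LinearMap.congr_fun hα.coassoc y
  simp only [LinearMap.comp_apply, LinearEquiv.coe_coe] at hco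
  obtain ⟨m, a, g, hrep⟩ := exists_fin_rep (α y)
  have hcu := LinearMap.congr_fun hα.counital y
  simp only [LinearMap.comp_apply, LinearEquiv.coe_coe, LinearMap.id_apply] at hcu
  rw [hrep] at hcu
  simp only [map_sum, TensorProduct.map_tmul, LinearMap.id_apply,
    TensorProduct.rid_tmul] at hcu
  rw [hco, hrep]
  simp only [map_sum, TensorProduct.map_tmul, LinearMap.id_apply]
  have hterm : ∀ j, psiMap A H
      ((TensorProduct.assoc ℂ A H H).symm (a j ⊗ₜ[ℂ] Coalgebra.comul (R := ℂ) (g j)))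
      = Coalgebra.counit (R := ℂ) (g j) • (a j ⊗ₜ[ℂ] (1 : H)) := by
    intro j
    rw [psi_assoc_symm, HopfAlgebra.mul_antipode_lTensor_comul_apply,
      Algebra.algebraMap_eq_smul_one, TensorProduct.tmul_smul]
  rw [Finset.sum_congr rfl fun j _ => hterm j, ← hcu, TensorProduct.sum_tmul]
  exact Finset.sum_congr rfl fun j _ => (TensorProduct.smul_tmul' _ _ _).symm

private lemma psi_can (α : A →ₗ[ℂ] A ⊗[ℂ] H) (hα : IsComoduleAlgebra α) (x y : A) :
    psiMap A H (TensorProduct.map α LinearMap.id (canMap α (x ⊗ₜ[ℂ] y)))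
      = α x * (y ⊗ₜ[ℂ] (1 : H)) := by
  rw [can_tmul]
  have key : ∀ t : A ⊗[ℂ] H,
      psiMap A H (TensorProduct.map α LinearMap.id ((x ⊗ₜ[ℂ] (1 : H)) * t))
        = α x * psiMap A H (TensorProduct.map α LinearMap.id t) := by
    intro t
    induction t with
    | zero => simp
    | add s t hs ht => rw [mul_add, map_add, map_add, hs, ht, map_add, map_add, mul_add]
    | tmul a g =>
      simp only [Algebra.TensorProduct.tmul_mul_tmul, one_mul, TensorProduct.map_tmul,
        LinearMap.id_apply]
      rw [alpha_mul α hα, psiMap_mul, psiMap_mul, mul_assoc]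
  rw [key, psi_alpha α hα]

/-- If `(A, α)` is a right Galois object for a Hopf *-algebra `H` (so `Δ`, `ε` and `α` are
compatible with the *-structures), then `h^[2]* ⊗ h^[1]* = (S(h)*)^[1] ⊗ (S(h)*)^[2]` for all
`h ∈ H`; consequently the Miyashita–Ulbrich action satisfies `(a ◁ h)* = a* ◁ S(h)*`.
The Sweedler-type identities are quantified over all finite representations of the
relevant tensors. -/
theorem translationMap_star (α : A →ₗ[ℂ] A ⊗[ℂ] H) (hα : IsComoduleAlgebra α)
    (e : (A ⊗[ℂ] A) ≃ₗ[ℂ] (A ⊗[ℂ] H)) (he : e.toLinearMap = canMap α)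
    -- `H` is a Hopf *-algebra: `Δ(h*) = Δ(h)^{*⊗*}` and `ε(h*) = conj ε(h)`
    (hcomul_star : ∀ (h : H) (n : ℕ) (a b : Fin n → H),
      Coalgebra.comul (R := ℂ) h = ∑ i, a i ⊗ₜ[ℂ] b i →
      Coalgebra.comul (R := ℂ) (star h) = ∑ i, star (a i) ⊗ₜ[ℂ] star (b i))
    (hcounit_star : ∀ h : H,
      Coalgebra.counit (R := ℂ) (star h) = starRingEnd ℂ (Coalgebra.counit (R := ℂ) h))
    -- `(A, α)` is a comodule *-algebra: `α(a*) = α(a)^{*⊗*}`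
    (hα_star : ∀ (a : A) (n : ℕ) (x : Fin n → A) (h : Fin n → H),
      α a = ∑ i, x i ⊗ₜ[ℂ] h i →
      α (star a) = ∑ i, star (x i) ⊗ₜ[ℂ] star (h i)) :
    (∀ (h : H) (n : ℕ) (u v : Fin n → A),
      translationMap e h = ∑ i, u i ⊗ₜ[ℂ] v i →
      translationMap e (star (HopfAlgebra.antipode (R := ℂ) h))
        = ∑ i, star (v i) ⊗ₜ[ℂ] star (u i)) ∧
    (∀ (a : A) (h : H),
      star (muAction e (a ⊗ₜ[ℂ] h))
        = muAction e (star a ⊗ₜ[ℂ] star (HopfAlgebra.antipode (R := ℂ) h))) := by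
  have hcan : ∀ h : H, canMap α (translationMap e h) = (1 : A) ⊗ₜ[ℂ] h := by
    intro h
    rw [← he]
    simp [translationMap, TensorProduct.mk_apply]
  have P4 : ∀ (h : H) (n : ℕ) (u v : Fin n → A),
      translationMap e h = ∑ i, u i ⊗ₜ[ℂ] v i →
      ∑ i, α (u i) * (v i ⊗ₜ[ℂ] (1 : H))
        = (1 : A) ⊗ₜ[ℂ] HopfAlgebra.antipode (R := ℂ) h := by
    intro h n u v hrep
    have h1 : ∑ i, α (u i) * (v i ⊗ₜ[ℂ] (1 : H))
        = psiMap A H (TensorProduct.map α LinearMap.id (canMap α (translationMap e h))) := by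
      rw [hrep]
      simp only [map_sum]
      exact Finset.sum_congr rfl fun i _ => (psi_can α hα (u i) (v i)).symm
    rw [h1, hcan h, TensorProduct.map_tmul, LinearMap.id_apply, hα.one_hom, psiMap_mul,
      Algebra.TensorProduct.tmul_mul_tmul, one_mul, one_mul]
  have part1 : ∀ (h : H) (n : ℕ) (u v : Fin n → A),
      translationMap e h = ∑ i, u i ⊗ₜ[ℂ] v i →
      translationMap e (star (HopfAlgebra.antipode (R := ℂ) h))
        = ∑ i, star (v i) ⊗ₜ[ℂ] star (u i) := by
    intro h n u v hrep
    have key : ∀ i, (starT (α (u i) * (v i ⊗ₜ[ℂ] (1 : H))) : A ⊗[ℂ] H)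
        = (star (v i) ⊗ₜ[ℂ] (1 : H)) * α (star (u i)) := by
      intro i
      obtain ⟨m, x, k, hx⟩ := exists_fin_rep (α (u i))
      rw [hα_star (u i) m x k hx, hx, Finset.sum_mul, Finset.mul_sum, map_sum]
      refine Finset.sum_congr rfl fun j _ => ?_
      rw [Algebra.TensorProduct.tmul_mul_tmul, Algebra.TensorProduct.tmul_mul_tmul,
        mul_one, one_mul, starT_tmul, star_mul]
    have hecan : canMap α (∑ i, star (v i) ⊗ₜ[ℂ] star (u i))
        = (1 : A) ⊗ₜ[ℂ] star (HopfAlgebra.antipode (R := ℂ) h) := by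
      rw [map_sum]
      rw [Finset.sum_congr rfl fun i _ =>
        (can_tmul α (star (v i)) (star (u i))).trans (key i).symm]
      rw [← map_sum, P4 h n u v hrep, starT_tmul, star_one]
    have egoal : e (∑ i, star (v i) ⊗ₜ[ℂ] star (u i))
        = (1 : A) ⊗ₜ[ℂ] star (HopfAlgebra.antipode (R := ℂ) h) := by
      rw [← hecan, ← he]; rfl
    have : translationMap e (star (HopfAlgebra.antipode (R := ℂ) h))
        = e.symm ((1 : A) ⊗ₜ[ℂ] star (HopfAlgebra.antipode (R := ℂ) h)) := by
      simp [translationMap, TensorProduct.mk_apply]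
    rw [this, ← egoal, e.symm_apply_apply]
  have muEq : ∀ (a : A) (h : H) (n : ℕ) (u v : Fin n → A),
      translationMap e h = ∑ i, u i ⊗ₜ[ℂ] v i →
      muAction e (a ⊗ₜ[ℂ] h) = ∑ i, u i * a * v i := by
    intro a h n u v hrep
    simp only [muAction, LinearMap.comp_apply, TensorProduct.map_tmul, LinearMap.id_apply]
    rw [hrep, TensorProduct.tmul_sum]
    simp only [map_sum]
    refine Finset.sum_congr rfl fun i _ => ?_
    simp [TensorProduct.assoc_symm_tmul, TensorProduct.comm_tmul, LinearMap.mul'_apply]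
  refine ⟨part1, ?_⟩
  intro a h
  obtain ⟨n, u, v, hrep⟩ := exists_fin_rep (translationMap e h)
  rw [muEq a h n u v hrep,
    muEq (star a) _ n (fun i => star (v i)) (fun i => star (u i)) (part1 h n u v hrep),
    star_sum]
  exact Finset.sum_congr rfl fun i _ => by simp [star_mul, mul_assoc]

end
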